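/- If X is a topological space without isolated points and A ⊆ X is a homological Z₀-set (i.e., A is closed and the singular homology group H₀(U, U \ A) is trivial for every open U ⊆ X), then A is nowhere dense in X. -/

import Mathlib

open CategoryTheory AlgebraicTopology Limits

/-- The singular chain complex of a topological space, with `ℤ` coefficients. -/
noncomputable def singularChains (X : Type) [TopologicalSpace X] :
    ChainComplex AddCommGrpCat ℕ :=
  (alternatingFaceMapComplex AddCommGrpCat).obj
    (TopCat.toSSet.obj (TopCat.of X) ⋙ AddCommGrpCat.free)

/-- The chain map induced by a continuous map. -/
noncomputable def singularChainsMap {X Y : Type} [TopologicalSpace X] [TopologicalSpace Y]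
    (f : C(X, Y)) : singularChains X ⟶ singularChains Y :=
  (alternatingFaceMapComplex AddCommGrpCat).map
    (Functor.whiskerRight (TopCat.toSSet.map (TopCat.ofHom f : TopCat.of X ⟶ TopCat.of Y)) AddCommGrpCat.free)

/-- The relative singular homology `H_k(W, V)` of a pair `(W, V)` with `V ⊆ W`,
defined as the homology of the cokernel of the map of singular chain complexes
induced by the inclusion. -/
noncomputable def relativeSingularHomology (W : Type) [TopologicalSpace W] (V : Set W)
    (k : ℕ) : AddCommGrpCat :=
  (cokernel (singularChainsMap ⟨(Subtype.val : V → W), continuous_subtype_val⟩)).homology k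

/-- `A` is a homological `Z_n`-set in `X`: `A` is closed and `H_k(U, U \ A) = 0`
for every open `U ⊆ X` and every `k ≤ n`. -/
def IsHomologicalZSet (X : Type) [TopologicalSpace X] (n : ℕ) (A : Set X) : Prop :=
  IsClosed A ∧ ∀ U : Set X, IsOpen U → ∀ k ≤ n,
    IsZero (relativeSingularHomology U {x : U | (x : X) ∉ A} k)

/-- The standard topological simplex is nonempty. -/
instance aux_nonempty_toTopObj (x : SimplexCategory) :
    Nonempty (stdSimplex ℝ (Fin (x.len + 1))) := by
  constructor
  exact stdSimplex.vertex 0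

/-- The singular simplicial set of an empty space has empty simplex types. -/
instance aux_isEmpty_simplices (V : Type) [TopologicalSpace V] [IsEmpty V]
    (n : SimplexCategoryᵒᵖ) : IsEmpty ((TopCat.toSSet.obj (TopCat.of V)).obj n) := by
  constructor
  intro f
  have g : C(stdSimplex ℝ (Fin (n.unop.len + 1)), V) := TopCat.toSSetObjEquiv _ n f
  obtain ⟨p⟩ := aux_nonempty_toTopObj n.unop
  exact IsEmpty.false (g p)

/-- The singular chain complex of an empty space is zero. -/
lemma aux_isZero_singularChains (V : Type) [TopologicalSpace V] [IsEmpty V] :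
    IsZero (singularChains V) := by
  have h : ∀ n : ℕ, IsZero ((singularChains V).X n) := by
    intro n
    haveI : Subsingleton ((singularChains V).X n) := by
      show Subsingleton (FreeAbelianGroup
        ((TopCat.toSSet.obj (TopCat.of V)).obj (Opposite.op (SimplexCategory.mk n))))
      infer_instance
    exact AddCommGrpCat.isZero_of_subsingleton _
  rw [IsZero.iff_id_eq_zero]
  apply HomologicalComplex.hom_ext
  intro n
  exact (h n).eq_of_src _ _

/-- The augmentation map on singular 0-chains. -/
noncomputable def aux_eps (U : Type) [TopologicalSpace U] :
    (singularChains U).X 0 ⟶ AddCommGrpCat.of ℤ :=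
  AddCommGrpCat.ofHom (FreeAbelianGroup.lift (fun _ => (1 : ℤ)))

lemma aux_free_map_comp_eps {α β : Type} (g : α ⟶ β) :
    AddCommGrpCat.free.map g ≫
        AddCommGrpCat.ofHom (FreeAbelianGroup.lift (fun _ : β => (1 : ℤ))) =
      AddCommGrpCat.ofHom (FreeAbelianGroup.lift (fun _ : α => (1 : ℤ))) := by
  refine AddCommGrpCat.hom_ext (FreeAbelianGroup.lift_ext _ _ (fun x => ?_))
  change FreeAbelianGroup.lift (fun _ : β => (1 : ℤ)) (FreeAbelianGroup.map _ (FreeAbelianGroup.of x)) =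
    FreeAbelianGroup.lift (fun _ : α => (1 : ℤ)) (FreeAbelianGroup.of x)
  simp

/-- The boundary map composed with the augmentation vanishes. -/
lemma aux_d_comp_eps (U : Type) [TopologicalSpace U] :
    (singularChains U).d 1 0 ≫ aux_eps U = 0 := by
  have hd : (singularChains U).d 1 0 =
      AlternatingFaceMapComplex.objD (TopCat.toSSet.obj (TopCat.of U) ⋙ AddCommGrpCat.free) 0 :=
    alternatingFaceMapComplex_obj_d _ 0
  rw [hd]
  dsimp [AlternatingFaceMapComplex.objD, SimplicialObject.δ]
  rw [Fin.sum_univ_two]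
  simp only [Fin.val_zero, pow_zero, one_smul, Fin.val_one, pow_one, neg_smul,
    Preadditive.add_comp, Preadditive.neg_comp]
  have h0 := aux_free_map_comp_eps
    ((TopCat.toSSet.obj (TopCat.of U)).map (SimplexCategory.δ (0 : Fin 2)).op)
  have h1 := aux_free_map_comp_eps
    ((TopCat.toSSet.obj (TopCat.of U)).map (SimplexCategory.δ (1 : Fin 2)).op)
  rw [show aux_eps U = AddCommGrpCat.ofHom (FreeAbelianGroup.lift (fun _ => (1 : ℤ))) from rfl]
  erw [Preadditive.add_comp, Preadditive.neg_comp, h0, h1, add_neg_cancel]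

/-- If the zeroth singular homology of `U` vanishes, then `U` is empty. -/
lemma aux_empty_of_isZero_H0 (U : Type) [TopologicalSpace U]
    (h : IsZero ((singularChains U).homology 0)) : IsEmpty U := by
  by_contra hne
  rw [not_isEmpty_iff] at hne
  obtain ⟨u⟩ := hne
  have hop : IsZero ((singularChains U).opcycles 0) :=
    h.of_iso (ChainComplex.isoHomologyι₀ _).symm
  have hd : (singularChains U).d 1 0 ≫ aux_eps U = 0 := aux_d_comp_eps U
  have hdesc := (singularChains U).p_descOpcycles (aux_eps U) 1 (by simp) hd
  have hdz : (singularChains U).descOpcycles (aux_eps U) 1 (by simp) hd = 0 :=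
    hop.eq_of_src _ _
  rw [hdz, Limits.comp_zero] at hdesc
  have σ : (TopCat.toSSet.obj (TopCat.of U)).obj (Opposite.op (SimplexCategory.mk 0)) :=
    (TopCat.toSSetObjEquiv _ _).symm (ContinuousMap.const _ u)
  have h1 : aux_eps U (FreeAbelianGroup.of σ) = (1 : ℤ) :=
    FreeAbelianGroup.lift_apply_of _ _
  have h0 : aux_eps U (FreeAbelianGroup.of σ) = (0 : ℤ) := by
    rw [← hdesc]; rfl
  rw [h1] at h0
  norm_num at h0

/-- If `X` has no isolated points and `A` is a homological `Z₀`-set in `X`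
(i.e. `A` is closed and `H₀(U, U \\ A) = 0` for every open `U ⊆ X`), then `A` is
nowhere dense in `X`. -/
theorem stmt_0 (X : Type) [TopologicalSpace X]
    (h_no_isolated : ∀ x : X, ¬ IsOpen ({x} : Set X))
    (A : Set X) (hA : IsHomologicalZSet X 0 A) :
    IsNowhereDense A := by
  obtain ⟨hclosed, hvan⟩ := hA
  rw [IsNowhereDense, hclosed.closure_eq]
  by_contra hne
  rw [← Set.not_nonempty_iff_eq_empty, not_not] at hne
  set U : Set X := interior A with hU
  have hUopen : IsOpen U := isOpen_interior
  have hz := hvan U hUopen 0 le_rfl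
  haveI : IsEmpty {x : U | (x : X) ∉ A} := by
    constructor
    rintro ⟨⟨x, hx⟩, hnx⟩
    exact hnx (interior_subset hx)
  set f := singularChainsMap
    ⟨(Subtype.val : {x : U | (x : X) ∉ A} → U), continuous_subtype_val⟩ with hf
  have hzsrc : IsZero (singularChains {x : U | (x : X) ∉ A}) := aux_isZero_singularChains _
  have hf0 : f = 0 := hzsrc.eq_of_src _ _
  have e1 : cokernel f ≅ singularChains U :=
    (cokernelIsoOfEq hf0).trans cokernelZeroIsoTarget
  have hz' : IsZero ((singularChains U).homology 0) :=
    hz.of_iso ((HomologicalComplex.homologyFunctor AddCommGrpCat _ 0).mapIso e1).symm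
  haveI := aux_empty_of_isZero_H0 U hz'
  obtain ⟨u, hu⟩ := hne
  exact IsEmpty.false (⟨u, hu⟩ : U)
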